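/- If κ : [0,∞) → [0,1) is a class K¹ function differentiable on (0,∞) with κ' > 0 there, 0 ≤ p < 1, Tc > 0, and y : [0,∞) → [0,∞) is an absolutely continuous function satisfying the differential inequality y'(t) ≤ -(1/((1-p)·Tc)) · κ(y(t))^p / κ'(y(t)) for almost every t with y(t) > 0, then y(t) = 0 for all t ≥ Tc·κ(y(0))^{1-p}; in particular, y(t) = 0 for all t ≥ Tc. -/

import Mathlib

open MeasureTheory

open Set Filter Metric Topology


theorem ae_hasDerivAt_primitive (f : ℝ → ℝ) (hf : LocallyIntegrable f volume) :
    ∀ᵐ x, HasDerivAt (fun u => ∫ t in (0:ℝ)..u, f t) (f x) x := by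
  filter_upwards [IsUnifLocDoublingMeasure.ae_tendsto_average (μ := volume) hf 1] with x hx
  have hint : ∀ a b : ℝ, IntervalIntegrable f volume a b := fun a b =>
    (hf.integrableOn_isCompact isCompact_Icc).intervalIntegrable
  have hFsub : ∀ u : ℝ, (∫ t in (0:ℝ)..u, f t) - ∫ t in (0:ℝ)..x, f t = ∫ t in x..u, f t :=
    fun u => intervalIntegral.integral_interval_sub_left (hint 0 u) (hint 0 x)
  have hslope : ∀ u : ℝ, u ≠ x →
      slope (fun u => ∫ t in (0:ℝ)..u, f t) x u
        = ⨍ t in closedBall ((x+u)/2) (|u - x|/2), f t := by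
    intro u hu
    have hvol : (volume (closedBall ((x+u)/2) (|u - x|/2))).toReal = |u - x| := by
      rw [Real.volume_closedBall, ENNReal.toReal_ofReal (by positivity)]
      ring
    rw [setAverage_eq, measureReal_def, hvol, slope_def_field, div_eq_inv_mul, hFsub u, smul_eq_mul]
    rcases lt_or_gt_of_ne hu with h | h
    · have hball : closedBall ((x+u)/2) (|u - x|/2) = Icc u x := by
        rw [Real.closedBall_eq_Icc, abs_of_neg (by linarith : u - x < 0)]
        congr 1 <;> ring
      rw [hball, integral_Icc_eq_integral_Ioc,
        ← intervalIntegral.integral_of_le h.le, abs_of_neg (by linarith : u - x < 0),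
        intervalIntegral.integral_symm u x]
      rw [show -(u-x) = x - u by ring, show (u - x)⁻¹ * -∫ (x : ℝ) in u..x, f x = -(u-x)⁻¹ * ∫ (x : ℝ) in u..x, f x by ring]
      congr 1
      rw [neg_inv]
      congr 1
      ring
    · have hball : closedBall ((x+u)/2) (|u - x|/2) = Icc x u := by
        rw [Real.closedBall_eq_Icc, abs_of_pos (by linarith : 0 < u - x)]
        congr 1 <;> ring
      rw [hball, integral_Icc_eq_integral_Ioc, ← intervalIntegral.integral_of_le h.le,
        abs_of_pos (by linarith : 0 < u - x)]
  rw [hasDerivAt_iff_tendsto_slope]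
  rw [show (𝓝[≠] x) = 𝓝[<] x ⊔ 𝓝[>] x from (nhdsLT_sup_nhdsGT x).symm,
    tendsto_sup]
  constructor
  · have := hx (ι := ℝ) (l := 𝓝[<] x) (fun u => (x+u)/2) (fun u => (x - u)/2)
      ?_ ?_
    · refine this.congr' ?_
      filter_upwards [self_mem_nhdsWithin] with u (hu : u < x)
      rw [hslope u hu.ne, abs_of_neg (by linarith : u - x < 0)]
      norm_num
    · rw [tendsto_nhdsWithin_iff]
      constructor
      · have : Tendsto (fun u : ℝ => (x - u)/2) (𝓝 x) (𝓝 ((x - x)/2)) := by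
          exact (continuous_const.sub continuous_id).div_const 2 |>.tendsto x
        simpa using this.mono_left nhdsWithin_le_nhds
      · filter_upwards [self_mem_nhdsWithin] with u (hu : u < x)
        simp only [mem_Ioi]; linarith
    · filter_upwards [self_mem_nhdsWithin] with u (hu : u < x)
      rw [mem_closedBall, Real.dist_eq, one_mul]
      rw [abs_of_pos (by linarith : (0:ℝ) < x - (x+u)/2)]
      linarith
  · have := hx (ι := ℝ) (l := 𝓝[>] x) (fun u => (x+u)/2) (fun u => (u - x)/2)
      ?_ ?_
    · refine this.congr' ?_
      filter_upwards [self_mem_nhdsWithin] with u (hu : x < u)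
      rw [hslope u hu.ne', abs_of_pos (by linarith : 0 < u - x)]
    · rw [tendsto_nhdsWithin_iff]
      constructor
      · have : Tendsto (fun u : ℝ => (u - x)/2) (𝓝 x) (𝓝 ((x - x)/2)) := by
          exact (continuous_id.sub continuous_const).div_const 2 |>.tendsto x
        simpa using this.mono_left nhdsWithin_le_nhds
      · filter_upwards [self_mem_nhdsWithin] with u (hu : x < u)
        simp only [mem_Ioi]; linarith
    · filter_upwards [self_mem_nhdsWithin] with u (hu : x < u)
      rw [mem_closedBall, Real.dist_eq, one_mul]
      rw [abs_of_neg (by linarith : x - (x+u)/2 < 0)]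
      linarith


theorem antitone_sub_le_of_ae_deriv (f : ℝ → ℝ) (K a b : ℝ) (hK : 0 ≤ K) (hab : a ≤ b)
    (hf : Antitone f) (hconst : ∀ t, b ≤ t → f t = f b)
    (hd : ∀ᵐ t, t ∈ Ioo a b → ∃ d, HasDerivAt f d t ∧ d ≤ -K) :
    f b - f a ≤ -K * (b - a) := by
  have hfm : Measurable f := hf.measurable
  set c : ℕ → ℝ := fun n => 1/(n+1) with hc_def
  have hc : ∀ n, 0 < c n := fun n => by positivity
  set h : ℕ → ℝ → ℝ := fun n t => (f t - f (t + c n)) / c n with hh_def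
  have hint : ∀ x y : ℝ, IntervalIntegrable f volume x y := fun x y => hf.intervalIntegrable
  have hhm : ∀ n, Measurable (h n) :=
    fun n => ((hfm.sub (hfm.comp (measurable_add_const (c n)))).div_const (c n))
  have hfab : f b ≤ f a := hf hab
  -- integral bound
  have key : ∀ n, ∫ t in a..b, h n t ≤ f a - f b := by
    intro n
    have e1 : ∫ t in a..b, f (t + c n) = ∫ t in (a + c n)..(b + c n), f t :=
      intervalIntegral.integral_comp_add_right f (c n)
    have e2 : (∫ t in a..b, f t) + ∫ t in b..(b + c n), f t = ∫ t in a..(b + c n), f t :=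
      intervalIntegral.integral_add_adjacent_intervals (hint a b) (hint b _)
    have e3 : (∫ t in a..(a + c n), f t) + ∫ t in (a + c n)..(b + c n), f t
        = ∫ t in a..(b + c n), f t :=
      intervalIntegral.integral_add_adjacent_intervals (hint a _) (hint _ _)
    have e4 : ∫ t in b..(b + c n), f t = c n * f b := by
      rw [intervalIntegral.integral_congr (g := fun _ => f b)
        (fun t ht => by
          rw [uIcc_of_le (show b ≤ b + c n by linarith [hc n])] at ht
          exact hconst t ht.1),
        intervalIntegral.integral_const, smul_eq_mul]
      ring
    have e5 : ∫ t in a..(a + c n), f t ≤ c n * f a := by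
      have := intervalIntegral.integral_mono_on (f := f) (g := fun _ => f a)
        (show a ≤ a + c n by linarith [hc n]) (hint a _) intervalIntegrable_const
        (fun t ht => hf ht.1)
      simpa [smul_eq_mul] using this
    have : ∫ t in a..b, h n t = ((∫ t in a..b, f t) - ∫ t in (a+c n)..(b+c n), f t) / c n := by
      rw [hh_def]
      simp only []
      rw [intervalIntegral.integral_div]
      congr 1
      rw [intervalIntegral.integral_sub (hint a b) ?_, e1]
      · simpa using (hint (a + c n) (b + c n)).comp_add_right (c n)
    rw [this]
    rw [div_le_iff₀ (hc n)]
    nlinarith [e2, e3, e4, e5]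
  have hInt : ∀ n, IntegrableOn (h n) (Ioc a b) volume := by
    intro n
    refine Integrable.mono' (integrable_const ((f a - f b)/c n)) (hhm n).aestronglyMeasurable ?_
    filter_upwards [ae_restrict_mem measurableSet_Ioc] with t ht
    have h1 : f t ≤ f a := hf ht.1.le
    have h2 : f b ≤ f (t + c n) := by
      rw [← hconst (b + c n) (by linarith [hc n])]
      exact hf (by linarith [ht.2])
    have h3 : f (t + c n) ≤ f t := hf (by linarith [hc n])
    rw [Real.norm_eq_abs, abs_of_nonneg (div_nonneg (by linarith) (hc n).le)]
    gcongr
  have hae : ∀ᵐ t ∂(volume.restrict (Ioc a b)),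
      ENNReal.ofReal K ≤ liminf (fun n => ENNReal.ofReal (h n t)) atTop := by
    have hne0 : ∀ᵐ t ∂(volume : Measure ℝ), t ≠ b := by
      rw [MeasureTheory.ae_iff]
      convert Real.volume_singleton (a := b) using 2
      ext t; simp
    have hne : ∀ᵐ t ∂(volume.restrict (Ioc a b)), t ≠ b := ae_restrict_of_ae hne0
    filter_upwards [ae_restrict_mem measurableSet_Ioc, hne, ae_restrict_of_ae hd]
      with t ht htb hdt
    obtain ⟨d, hder, hdK⟩ := hdt ⟨ht.1, lt_of_le_of_ne ht.2 htb⟩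
    have h1 : Tendsto (fun n : ℕ => t + c n) atTop (𝓝[≠] t) := by
      rw [tendsto_nhdsWithin_iff]
      refine ⟨?_, Eventually.of_forall fun n => ?_⟩
      · have hc0 : Tendsto c atTop (𝓝 0) := tendsto_one_div_add_atTop_nhds_zero_nat
        simpa using tendsto_const_nhds.add hc0
      · simp only [mem_compl_iff, mem_singleton_iff]
        intro hcon
        exact absurd (by linarith [hc n] : (0:ℝ) < c n) (by nlinarith [hcon])
    have h2 := (hasDerivAt_iff_tendsto_slope.1 hder).comp h1
    have h3 : Tendsto (fun n => h n t) atTop (𝓝 (-d)) := by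
      have : (fun n => h n t) = fun n => -(slope f t (t + c n)) := by
        funext n
        rw [slope_def_field, add_sub_cancel_left, ← neg_div, neg_sub]
      rw [this]
      simpa using h2.neg
    have h4 := ((ENNReal.continuous_ofReal.tendsto (-d)).comp h3).liminf_eq
    calc ENNReal.ofReal K ≤ ENNReal.ofReal (-d) := ENNReal.ofReal_le_ofReal (by linarith)
      _ = _ := h4.symm
  have fatou := lintegral_liminf_le (μ := volume.restrict (Ioc a b)) (u := atTop)
    (f := fun n t => ENNReal.ofReal (h n t))
    (fun n => ENNReal.measurable_ofReal.comp (hhm n))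
  have lhs : ENNReal.ofReal K * ENNReal.ofReal (b - a)
      ≤ ∫⁻ t in Ioc a b, liminf (fun n => ENNReal.ofReal (h n t)) atTop := by
    calc ENNReal.ofReal K * ENNReal.ofReal (b - a)
        = ∫⁻ _ in Ioc a b, ENNReal.ofReal K := by
          rw [MeasureTheory.setLIntegral_const, Real.volume_Ioc]
      _ ≤ _ := lintegral_mono_ae hae
  have rhs : ∀ n, (∫⁻ t in Ioc a b, ENNReal.ofReal (h n t)) ≤ ENNReal.ofReal (f a - f b) := by
    intro n
    rw [← ofReal_integral_eq_lintegral_ofReal (hInt n) ?_]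
    · apply ENNReal.ofReal_le_ofReal
      rw [show ∫ t in Ioc a b, h n t = ∫ t in a..b, h n t from
        (intervalIntegral.integral_of_le hab).symm]
      exact key n
    · filter_upwards [ae_restrict_mem measurableSet_Ioc] with t _
      exact div_nonneg (sub_nonneg.2 (hf (by linarith [hc n]))) (hc n).le
  have hlim : liminf (fun n => ∫⁻ t in Ioc a b, ENNReal.ofReal (h n t)) atTop
      ≤ ENNReal.ofReal (f a - f b) := by
    have := liminf_le_liminf (f := (atTop : Filter ℕ)) (Eventually.of_forall rhs)
    rwa [liminf_const] at this
  have chain : ENNReal.ofReal (K * (b - a)) ≤ ENNReal.ofReal (f a - f b) := by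
    rw [ENNReal.ofReal_mul hK]
    exact lhs.trans (fatou.trans hlim)
  have := (ENNReal.ofReal_le_ofReal_iff (by linarith)).1 chain
  linarith


def IsClassK1 (kappa : ℝ → ℝ) : Prop :=
  ContinuousOn kappa (Set.Ici 0) ∧ StrictMonoOn kappa (Set.Ici 0) ∧ kappa 0 = 0 ∧
    Filter.Tendsto kappa Filter.atTop (nhds 1) ∧
    ∀ r ∈ Set.Ici (0 : ℝ), kappa r ∈ Set.Ico (0 : ℝ) 1

/- Comparison lemma for the differential inequality: if y is absolutely continuous
(y b - y a = ∫ y' over [a,b]) and y' ≤ -(1/((1-p)Tc)) κ(y)^p/κ'(y) almost everywhere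
where y > 0, then y(t) = 0 for all t ≥ Tc κ(y 0)^(1-p), in particular for all t ≥ Tc. -/
theorem comparison_ineq_settling (κ κ' : ℝ → ℝ) (hκ : IsClassK1 κ)
    (hκ' : ∀ r > (0:ℝ), HasDerivAt κ (κ' r) r ∧ 0 < κ' r)
    (p Tc : ℝ) (hp : 0 ≤ p) (hp1 : p < 1) (hTc : 0 < Tc)
    (y y' : ℝ → ℝ) (hy_nonneg : ∀ t ≥ (0:ℝ), 0 ≤ y t)
    (hy_cont : ContinuousOn y (Set.Ici 0))
    (hy_int : ∀ a b : ℝ, 0 ≤ a → a ≤ b → IntervalIntegrable y' volume a b)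
    (hy_ac : ∀ a b : ℝ, 0 ≤ a → a ≤ b → y b - y a = ∫ t in a..b, y' t)
    (hy_ineq : ∀ᵐ t ∂(volume.restrict (Set.Ici (0:ℝ))), 0 < y t →
      y' t ≤ -(1 / ((1 - p) * Tc)) * (κ (y t) ^ p / κ' (y t))) :
    (∀ t ≥ Tc * κ (y 0) ^ (1 - p), y t = 0) ∧ (∀ t ≥ Tc, y t = 0) := by
  obtain ⟨hκcont, hκmono, hκ0, -, hκico⟩ := hκ
  have hκnn : ∀ r, 0 ≤ r → 0 ≤ κ r := fun r hr => (hκico r hr).1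
  have hκpos : ∀ r, 0 < r → 0 < κ r := fun r hr => by
    have := hκmono (le_refl (0:ℝ) : (0:ℝ) ∈ Ici 0) hr.le hr
    rwa [hκ0] at this
  have h1p : 0 < 1 - p := by linarith
  have hy_ineq' : ∀ᵐ t, 0 ≤ t → 0 < y t →
      y' t ≤ -(1 / ((1 - p) * Tc)) * (κ (y t) ^ p / κ' (y t)) :=
    (ae_restrict_iff' measurableSet_Ici).1 hy_ineq
  have hrhs_nonpos : ∀ t, 0 ≤ t → 0 < y t →
      -(1 / ((1 - p) * Tc)) * (κ (y t) ^ p / κ' (y t)) ≤ 0 := by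
    intro t ht hyt
    apply mul_nonpos_of_nonpos_of_nonneg
    · have : 0 < 1 / ((1 - p) * Tc) := by positivity
      linarith
    · exact div_nonneg (Real.rpow_nonneg (hκnn _ (hy_nonneg t ht)) p) (hκ' _ hyt).2.le
  -- Lemma A : nonincreasing on intervals of positivity
  have lemA : ∀ a b : ℝ, 0 ≤ a → a ≤ b → (∀ s ∈ Ioc a b, 0 < y s) → y b ≤ y a := by
    intro a b ha hab hpos
    have : y b - y a ≤ 0 := by
      rw [hy_ac a b ha hab, intervalIntegral.integral_of_le hab]
      apply integral_nonpos_of_ae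
      filter_upwards [ae_restrict_mem measurableSet_Ioc, ae_restrict_of_ae hy_ineq']
        with s hs hineq
      have hs0 : 0 ≤ s := le_trans ha hs.1.le
      have hys : 0 < y s := hpos s hs
      exact le_trans (hineq hs0 hys) (hrhs_nonpos s hs0 hys)
    linarith
  -- Lemma B : zero is absorbing
  have lemB : ∀ t0 t1 : ℝ, 0 ≤ t0 → t0 ≤ t1 → y t0 = 0 → y t1 = 0 := by
    intro t0 t1 ht0 ht01 hy0
    rcases eq_or_lt_of_le ht01 with rfl | hlt
    · exact hy0
    set S : Set ℝ := Icc t0 t1 ∩ y ⁻¹' {0} with hS_def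
    have hS_closed : IsClosed S :=
      (hy_cont.mono (fun x hx => le_trans ht0 hx.1)).preimage_isClosed_of_isClosed
        isClosed_Icc isClosed_singleton
    have hS_ne : S.Nonempty := ⟨t0, ⟨le_rfl, ht01⟩, by simpa using hy0⟩
    have hS_bdd : BddAbove S := ⟨t1, fun x hx => hx.1.2⟩
    set s := sSup S with hs_def
    have hsS : s ∈ S := hS_closed.csSup_mem hS_ne hS_bdd
    have hys : y s = 0 := by simpa using hsS.2
    have hst1 : s ≤ t1 := hsS.1.2
    rcases eq_or_lt_of_le hst1 with heq | hslt
    · exact heq ▸ hys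
    have hpos : ∀ u ∈ Ioc s t1, 0 < y u := by
      intro u hu
      have hu0 : 0 ≤ u := le_trans ht0 (le_trans hsS.1.1 hu.1.le)
      rcases (hy_nonneg u hu0).lt_or_eq with h | h
      · exact h
      · exfalso
        have huS : u ∈ S := ⟨⟨le_trans hsS.1.1 hu.1.le, hu.2⟩, by simp [← h]⟩
        exact absurd (le_csSup hS_bdd huS) (not_le.2 hu.1)
    have h1 := lemA s t1 (le_trans ht0 hsS.1.1) hst1 hpos
    have h2 := hy_nonneg t1 (le_trans ht0 ht01)
    linarith [hys ▸ h1]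
  -- global antitonicity of y on [0, ∞)
  have hy_anti : ∀ a b : ℝ, 0 ≤ a → a ≤ b → y b ≤ y a := by
    intro a b ha hab
    by_cases hpos : ∀ s ∈ Ioc a b, 0 < y s
    · exact lemA a b ha hab hpos
    · push_neg at hpos
      obtain ⟨s, hs, hys⟩ := hpos
      have hs0 : 0 ≤ s := le_trans ha hs.1.le
      have h0 : y s = 0 := le_antisymm hys (hy_nonneg s hs0)
      rw [lemB s b hs0 hs.2 h0]
      exact hy_nonneg a ha
  -- a.e. differentiability of y on (0, ∞)
  have hyD : ∀ᵐ x, 0 < x → HasDerivAt y (y' x) x := by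
    set f : ℝ → ℝ := Set.indicator (Ici 0) y' with hf_def
    have hfli : LocallyIntegrable f volume := by
      intro x
      refine ⟨Icc (x - 1) (x + 1), Icc_mem_nhds (by linarith) (by linarith), ?_⟩
      have h1 : IntegrableOn y' (Icc 0 (max 0 (x+1))) volume := by
        have := hy_int 0 (max 0 (x+1)) le_rfl (le_max_left _ _)
        rwa [intervalIntegrable_iff_integrableOn_Icc_of_le (le_max_left _ _)] at this
      rw [hf_def, IntegrableOn, integrable_indicator_iff measurableSet_Ici, IntegrableOn,
        Measure.restrict_restrict measurableSet_Ici]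
      exact h1.mono_set (fun u hu => ⟨hu.1, le_trans hu.2.2 (le_max_right _ _)⟩)
    have hD := ae_hasDerivAt_primitive f hfli
    filter_upwards [hD] with x hx hx0
    have hEq : ∀ u : ℝ, 0 ≤ u → y u = y 0 + ∫ t in (0:ℝ)..u, f t := by
      intro u hu
      have h2 : ∫ t in (0:ℝ)..u, f t = ∫ t in (0:ℝ)..u, y' t := by
        apply intervalIntegral.integral_congr
        intro s hs
        rw [uIcc_of_le hu] at hs
        exact Set.indicator_of_mem hs.1 y'
      rw [h2, ← hy_ac 0 u le_rfl hu]; ring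
    have hxev : y =ᶠ[𝓝 x] (fun u => y 0 + ∫ t in (0:ℝ)..u, f t) := by
      filter_upwards [isOpen_Ioi.mem_nhds hx0] with u (hu : 0 < u)
      exact hEq u hu.le
    have hder : HasDerivAt y (f x) x := (hx.const_add (y 0)).congr_of_eventuallyEq hxev
    have hind : f x = y' x := Set.indicator_of_mem (mem_Ici.mpr hx0.le) y'
    rwa [hind] at hder
  -- Lemma C : the key decay estimate
  have lemC : ∀ b : ℝ, 0 ≤ b → (∀ s ∈ Icc 0 b, 0 < y s) →
      κ (y b) ^ (1 - p) - κ (y 0) ^ (1 - p) ≤ -(1/Tc) * (b - 0) := by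
    intro b hb hpos
    set cl : ℝ → ℝ := fun t => max 0 (min t b) with hcl_def
    have hcl_mem : ∀ t, cl t ∈ Icc 0 b := fun t => ⟨le_max_left _ _, max_le hb (min_le_right _ _)⟩
    have hcl_mono : Monotone cl := fun u v huv =>
      max_le_max le_rfl (min_le_min huv le_rfl)
    set f : ℝ → ℝ := fun t => κ (y (cl t)) ^ (1 - p) with hf_def
    have hf_anti : Antitone f := by
      intro u v huv
      have h1 : y (cl v) ≤ y (cl u) := hy_anti _ _ (hcl_mem u).1 (hcl_mono huv)
      have h2 : κ (y (cl v)) ≤ κ (y (cl u)) :=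
        hκmono.monotoneOn (hy_nonneg _ (hcl_mem v).1) (hy_nonneg _ (hcl_mem u).1) h1
      exact Real.rpow_le_rpow (hκnn _ (hy_nonneg _ (hcl_mem v).1)) h2 h1p.le
    have hf_const : ∀ t, b ≤ t → f t = f b := by
      intro t htb
      rw [hf_def]
      simp only [hcl_def, min_eq_right htb, min_self]
    have hd : ∀ᵐ t, t ∈ Ioo 0 b → ∃ d, HasDerivAt f d t ∧ d ≤ -(1/Tc) := by
      filter_upwards [hyD, hy_ineq'] with t hD hineq ht
      have ht0 : 0 < t := ht.1
      have hyt : 0 < y t := hpos t ⟨ht0.le, ht.2.le⟩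
      have hder := hD ht0
      have hineq' := hineq ht0.le hyt
      set k := κ (y t) with hk_def
      have hk : 0 < k := hκpos _ hyt
      have hkp : 0 < κ' (y t) := (hκ' _ hyt).2
      have hκd : HasDerivAt κ (κ' (y t)) (y t) := (hκ' _ hyt).1
      have hcomp1 : HasDerivAt (fun u => κ (y u)) (κ' (y t) * y' t) t := hκd.comp t hder
      have hrpow : HasDerivAt (fun z : ℝ => z ^ (1 - p)) ((1 - p) * k ^ (1 - p - 1)) k :=
        Real.hasDerivAt_rpow_const (Or.inl hk.ne')
      have hcomp2 : HasDerivAt (fun u => κ (y u) ^ (1 - p))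
          ((1 - p) * k ^ (1 - p - 1) * (κ' (y t) * y' t)) t := HasDerivAt.comp (h := fun u => κ (y u)) t hrpow hcomp1
      have hfeq : (fun u => κ (y u) ^ (1 - p)) =ᶠ[𝓝 t] f := by
        filter_upwards [isOpen_Ioo.mem_nhds ht] with u hu
        rw [hf_def]
        simp only [hcl_def, min_eq_left hu.2.le, max_eq_right hu.1.le]
      refine ⟨_, hcomp2.congr_of_eventuallyEq hfeq.symm, ?_⟩
      have hbase : 0 < (1 - p) * k ^ (1 - p - 1) * κ' (y t) := by positivity
      calc (1 - p) * k ^ (1 - p - 1) * (κ' (y t) * y' t)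
          = ((1 - p) * k ^ (1 - p - 1) * κ' (y t)) * y' t := by ring
        _ ≤ ((1 - p) * k ^ (1 - p - 1) * κ' (y t)) *
            (-(1 / ((1 - p) * Tc)) * (k ^ p / κ' (y t))) :=
            mul_le_mul_of_nonneg_left hineq' hbase.le
        _ = -(1/Tc) * (k ^ (1 - p - 1) * k ^ p) := by
            field_simp
        _ = -(1/Tc) := by
            rw [← Real.rpow_add hk, show 1 - p - 1 + p = (0:ℝ) by ring, Real.rpow_zero, mul_one]
    have hmain := antitone_sub_le_of_ae_deriv f (1/Tc) 0 b (by positivity) hb hf_anti hf_const hd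
    have hfb : f b = κ (y b) ^ (1 - p) := by
      rw [hf_def]
      simp only [hcl_def, min_self, max_eq_right hb]
    have hf0 : f 0 = κ (y 0) ^ (1 - p) := by
      rw [hf_def]
      simp only [hcl_def, min_eq_left hb, max_self]
    rw [hfb, hf0] at hmain
    exact hmain
  -- conclusion
  have hκ0nn : 0 ≤ κ (y 0) := hκnn _ (hy_nonneg 0 le_rfl)
  have main1 : ∀ t ≥ Tc * κ (y 0) ^ (1 - p), y t = 0 := by
    intro t ht
    have hT0 : 0 ≤ Tc * κ (y 0) ^ (1 - p) := mul_nonneg hTc.le (Real.rpow_nonneg hκ0nn _)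
    have ht0 : 0 ≤ t := le_trans hT0 ht
    rcases (hy_nonneg t ht0).lt_or_eq with hyt | hyt
    swap
    · exact hyt.symm
    exfalso
    have hpos : ∀ s ∈ Icc 0 t, 0 < y s := by
      intro s hs
      rcases (hy_nonneg s hs.1).lt_or_eq with h | h
      · exact h
      · exfalso
        have := lemB s t hs.1 hs.2 h.symm
        linarith
    have hC := lemC t ht0 hpos
    have hκt : 0 < κ (y t) ^ (1 - p) := Real.rpow_pos_of_pos (hκpos _ hyt) _
    have h6 := mul_le_mul_of_nonneg_left hC hTc.le
    have h7 : Tc * (-(1/Tc) * (t - 0)) = -t := by field_simp; ring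
    rw [h7] at h6
    nlinarith [mul_pos hTc hκt]
  refine ⟨main1, fun t ht => main1 t ?_⟩
  have h8 : κ (y 0) ^ (1 - p) ≤ 1 :=
    Real.rpow_le_one hκ0nn (hκico _ (hy_nonneg 0 le_rfl)).2.le h1p.le
  nlinarith
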